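/- The series sum_{k=1}^infty (A_k/k!)^2 / (A_{2k}/(2k)!) converges, where A_n is the number of labeled DAGs on n vertices. -/

import Mathlib

open Filter Finset

/-- A directed graph (given by its edge relation) is acyclic iff no vertex lies on a
directed cycle, i.e. the transitive closure is irreflexive. -/
def DigraphAcyclic {V : Type*} (g : V → V → Prop) : Prop :=
  ∀ a, ¬ Relation.TransGen g a a

/-- The number of labeled DAGs on `n` vertices. -/
noncomputable def dagCount (n : ℕ) : ℕ :=
  Nat.card {g : Fin n → Fin n → Bool // DigraphAcyclic fun x y => g x y = true}

/-- The number of connected labeled DAGs on `n` vertices (connected means the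
underlying undirected graph is connected). -/
noncomputable def connDagCount (n : ℕ) : ℕ :=
  Nat.card {g : Fin n → Fin n → Bool //
    (DigraphAcyclic fun x y => g x y = true) ∧
    ∀ a b : Fin n, Relation.ReflTransGen (fun x y => g x y = true ∨ g y x = true) a b}

/-- Combine two digraphs on `Fin k` and an arbitrary set of cross edges into a digraph on
`Fin k ⊕ Fin k`; all cross edges go from left to right. -/
def packDigraph {k : ℕ} (g₁ g₂ X : Fin k → Fin k → Bool) :
    Fin k ⊕ Fin k → Fin k ⊕ Fin k → Bool
  | .inl a, .inl b => g₁ a b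
  | .inl a, .inr b => X a b
  | .inr _, .inl _ => false
  | .inr a, .inr b => g₂ a b

/-- Projection predicate used in the acyclicity proof of `packDigraph`. -/
def packPred {k : ℕ} (g₁ g₂ : Fin k → Fin k → Bool) :
    Fin k ⊕ Fin k → Fin k ⊕ Fin k → Prop
  | .inl a, .inl b => Relation.TransGen (fun x y => g₁ x y = true) a b
  | .inl _, .inr _ => True
  | .inr _, .inl _ => False
  | .inr a, .inr b => Relation.TransGen (fun x y => g₂ x y = true) a b

lemma packDigraph_transGen {k : ℕ} (g₁ g₂ X : Fin k → Fin k → Bool) {u v : Fin k ⊕ Fin k}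
    (h : Relation.TransGen (fun x y => packDigraph g₁ g₂ X x y = true) u v) :
    packPred g₁ g₂ u v := by
  induction h with
  | single h =>
    rename_i b
    rcases u with a | a <;> rcases b with b | b
    · exact Relation.TransGen.single h
    · trivial
    · exact Bool.noConfusion h
    · exact Relation.TransGen.single h
  | tail h₁ h₂ ih =>
    rename_i v w
    rcases u with a | a <;> rcases v with b | b <;> rcases w with c | c <;>
      first
        | exact ih.elim
        | exact Bool.noConfusion h₂
        | trivial
        | exact ih.tail h₂

lemma packDigraph_acyclic {k : ℕ} (g₁ g₂ X : Fin k → Fin k → Bool)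
    (h₁ : DigraphAcyclic fun x y => g₁ x y = true)
    (h₂ : DigraphAcyclic fun x y => g₂ x y = true) :
    DigraphAcyclic fun x y => packDigraph g₁ g₂ X x y = true := by
  rintro (a | a) h
  · exact h₁ a (packDigraph_transGen g₁ g₂ X h)
  · exact h₂ a (packDigraph_transGen g₁ g₂ X h)

lemma one_le_dagCount (n : ℕ) : 1 ≤ dagCount n := by
  have : Nonempty {g : Fin n → Fin n → Bool // DigraphAcyclic fun x y => g x y = true} := by
    refine ⟨fun _ _ => false, fun a h => ?_⟩
    cases h with
    | single h => simp at h
    | tail _ h => simp at h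
  exact Nat.card_pos

/-- The key counting inequality: gluing two DAGs on `k` vertices with arbitrary
cross edges gives an injection into DAGs on `2k` vertices. -/
lemma dagCount_key (k : ℕ) : dagCount k * dagCount k * 2 ^ (k * k) ≤ dagCount (2 * k) := by
  classical
  set D := fun n => {g : Fin n → Fin n → Bool // DigraphAcyclic fun x y => g x y = true} with hD
  let e : Fin k ⊕ Fin k ≃ Fin (2 * k) := finSumFinEquiv.trans (finCongr (two_mul k).symm)
  let Φ : D k × D k × (Fin k → Fin k → Bool) → D (2 * k) := fun t =>
    ⟨fun x y => packDigraph t.1.1 t.2.1.1 t.2.2 (e.symm x) (e.symm y), by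
      intro a h
      have := Relation.TransGen.lift (f := e.symm)
        (p := fun u v => packDigraph t.1.1 t.2.1.1 t.2.2 u v = true) (fun _ _ hr => hr) _ _ h
      exact packDigraph_acyclic t.1.1 t.2.1.1 t.2.2 t.1.2 t.2.1.2 (e.symm a) this⟩
  have hinj : Function.Injective Φ := by
    rintro ⟨⟨g₁, hg₁⟩, ⟨g₂, hg₂⟩, X⟩ ⟨⟨g₁', hg₁'⟩, ⟨g₂', hg₂'⟩, X'⟩ h
    have h' := congrArg Subtype.val h
    simp only [Φ] at h'
    have key : ∀ u v : Fin k ⊕ Fin k,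
        packDigraph g₁ g₂ X u v = packDigraph g₁' g₂' X' u v := by
      intro u v
      have := congrFun (congrFun h' (e u)) (e v)
      simpa using this
    refine Prod.ext ?_ (Prod.ext ?_ ?_) <;> simp only
    · exact Subtype.ext (funext fun a => funext fun b => key (.inl a) (.inl b))
    · exact Subtype.ext (funext fun a => funext fun b => key (.inr a) (.inr b))
    · exact funext fun a => funext fun b => key (.inl a) (.inr b)
  have hcard := Nat.card_le_card_of_injective Φ hinj
  have hfun : Nat.card (Fin k → Fin k → Bool) = 2 ^ (k * k) := by
    rw [Nat.card_fun, Nat.card_fun]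
    simp [Nat.card_eq_fintype_card, ← pow_mul]
  calc dagCount k * dagCount k * 2 ^ (k * k)
      = Nat.card (D k × D k × (Fin k → Fin k → Bool)) := by
        rw [Nat.card_prod, Nat.card_prod, hfun, dagCount, mul_assoc]
    _ ≤ Nat.card (D (2 * k)) := hcard
    _ = dagCount (2 * k) := rfl

lemma factorial_two_mul_le (k : ℕ) : (2 * k).factorial ≤ k.factorial ^ 2 * 4 ^ k := by
  have h1 : (2 * k).choose k * k.factorial * k.factorial = (2 * k).factorial := by
    have := Nat.choose_mul_factorial_mul_factorial (Nat.le_mul_of_pos_left k two_pos)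
    simpa [two_mul, Nat.add_sub_cancel] using this
  have h2 : (2 * k).choose k ≤ 4 ^ k := by
    calc (2 * k).choose k ≤ ∑ m ∈ range (2 * k + 1), (2 * k).choose m :=
          Finset.single_le_sum (fun i _ => Nat.zero_le _)
            (by simp [Nat.lt_succ_iff, Nat.le_mul_of_pos_left k two_pos])
      _ = 2 ^ (2 * k) := Nat.sum_range_choose (2 * k)
      _ = 4 ^ k := by rw [pow_mul]; norm_num
  calc (2 * k).factorial = (2 * k).choose k * k.factorial * k.factorial := h1.symm
    _ ≤ 4 ^ k * k.factorial * k.factorial := by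
        exact Nat.mul_le_mul_right _ (Nat.mul_le_mul_right _ h2)
    _ = k.factorial ^ 2 * 4 ^ k := by ring

/-- The crude numeric bound, entirely in `ℕ`. -/
lemma dag_nat_bound (m : ℕ) :
    dagCount (m + 1) ^ 2 * (2 * (m + 1)).factorial * 2 ^ m ≤
      2 * ((m + 1).factorial ^ 2 * dagCount (2 * (m + 1))) := by
  set k := m + 1 with hk
  have hkey : dagCount k ^ 2 * 2 ^ (k * k) ≤ dagCount (2 * k) := by
    have := dagCount_key k; rwa [← sq] at this
  have hm : m ≤ m * m := by
    cases m with
    | zero => simp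
    | succ n => exact Nat.le_mul_of_pos_left _ n.succ_pos
  have hexp : 2 * k + m ≤ 1 + k * k := by
    simp only [hk]; nlinarith [hm]
  have h4 : (4 : ℕ) ^ k = 2 ^ (2 * k) := by rw [pow_mul]; norm_num
  calc dagCount k ^ 2 * (2 * k).factorial * 2 ^ m
      ≤ dagCount k ^ 2 * (k.factorial ^ 2 * 4 ^ k) * 2 ^ m := by
        gcongr
        exact factorial_two_mul_le k
    _ = k.factorial ^ 2 * (dagCount k ^ 2 * 2 ^ (2 * k + m)) := by
        rw [h4, pow_add]; ring
    _ ≤ k.factorial ^ 2 * (dagCount k ^ 2 * 2 ^ (1 + k * k)) := by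
        gcongr
        · exact one_le_two
    _ = 2 * (k.factorial ^ 2 * (dagCount k ^ 2 * 2 ^ (k * k))) := by
        rw [pow_add]; ring
    _ ≤ 2 * (k.factorial ^ 2 * dagCount (2 * k)) := by gcongr

theorem summable_dag_ratio_series :
    Summable fun k : ℕ =>
      ((dagCount (k + 1) : ℝ) / (k + 1).factorial) ^ 2 /
        ((dagCount (2 * (k + 1)) : ℝ) / (2 * (k + 1)).factorial) := by
  have hle : ∀ m : ℕ,
      ((dagCount (m + 1) : ℝ) / (m + 1).factorial) ^ 2 /
        ((dagCount (2 * (m + 1)) : ℝ) / (2 * (m + 1)).factorial) ≤ 2 * (1 / 2) ^ m := by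
    intro m
    have hf : (0 : ℝ) < ((m + 1).factorial : ℕ) := by
      exact_mod_cast (m + 1).factorial_pos
    have hF : (0 : ℝ) < ((2 * (m + 1)).factorial : ℕ) := by
      exact_mod_cast (2 * (m + 1)).factorial_pos
    have hB : (0 : ℝ) < (dagCount (2 * (m + 1)) : ℕ) := by
      exact_mod_cast one_le_dagCount (2 * (m + 1))
    have heq : ((dagCount (m + 1) : ℝ) / (m + 1).factorial) ^ 2 /
        ((dagCount (2 * (m + 1)) : ℝ) / (2 * (m + 1)).factorial) =
        ((dagCount (m + 1) : ℝ) ^ 2 * (2 * (m + 1)).factorial) /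
          (((m + 1).factorial : ℝ) ^ 2 * dagCount (2 * (m + 1))) := by
      field_simp
      try ring
    have h2 : (2 : ℝ) * (1 / 2) ^ m = 2 / 2 ^ m := by
      rw [one_div, inv_pow]; ring
    rw [heq, h2, div_le_div_iff₀ (by positivity) (by positivity)]
    exact_mod_cast dag_nat_bound m
  refine Summable.of_nonneg_of_le (fun m => by positivity) hle ?_
  exact (summable_geometric_of_lt_one (by norm_num) (by norm_num)).mul_left 2
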